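/- An integer matrix of block form (Q; p·I_n) (Q stacked above p times the n×n identity) is equivalent over Z to the diagonal block matrix diag(I_r, p·I_d), where r is the rank over Z/p of the mod-p reduction of Q and d = n − r. -/

import Mathlib

open Matrix

namespace StackedSmith


variable {R : Type*} [CommRing R]

/-- Rectangular "pseudo-diagonal" pattern matrix with threshold `s`. -/
def patt (m n s : ℕ) (w : ℕ → R) : Matrix (Fin m) (Fin n) R :=
  Matrix.of fun i j => if (i : ℕ) = (j : ℕ) ∧ (i : ℕ) < s then w i else 0

lemma patt_apply {m n s : ℕ} (w : ℕ → R) (i : Fin m) (j : Fin n) :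
    patt m n s w i j = if (i : ℕ) = (j : ℕ) ∧ (i : ℕ) < s then w i else 0 := rfl

lemma patt_congr {m n s : ℕ} {w v : ℕ → R} (h : ∀ k, k < s → w k = v k) :
    patt m n s w = patt m n s v := by
  ext i j
  simp only [patt_apply]
  split_ifs with hc
  · exact h _ hc.2
  · rfl

lemma patt_mul_patt {m₁ m₂ m₃ s t : ℕ} (w v : ℕ → R) :
    patt m₁ m₂ s w * patt m₂ m₃ t v
      = patt m₁ m₃ (min (min s t) m₂) (fun k => w k * v k) := by
  ext i j
  rw [Matrix.mul_apply]
  by_cases him : (i : ℕ) < m₂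
  · rw [Finset.sum_eq_single (⟨(i : ℕ), him⟩ : Fin m₂)]
    · simp only [patt_apply]
      by_cases hij : (i : ℕ) = (j : ℕ)
      · by_cases hs : (i : ℕ) < s <;> by_cases ht : (i : ℕ) < t <;>
          simp_all [lt_min_iff] <;> rw [if_neg (by omega), if_neg (by omega)]
      · simp [hij]
    · intro k _ hk
      have : (i : ℕ) ≠ (k : ℕ) := by
        intro h; exact hk (by ext; simp [h.symm])
      simp [patt_apply, this]
    · intro h; exact absurd (Finset.mem_univ _) h
  · have : ∀ k : Fin m₂, patt m₁ m₂ s w i k * patt m₂ m₃ t v k j = 0 := by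
      intro k
      have : (i : ℕ) ≠ (k : ℕ) := fun h => him (h ▸ k.isLt)
      simp [patt_apply, this]
    rw [Finset.sum_congr rfl fun k _ => this k, Finset.sum_const, smul_zero]
    simp only [patt_apply, lt_min_iff]
    rw [if_neg (by tauto)]

lemma patt_add {m n s : ℕ} (w v : ℕ → R) :
    patt m n s w + patt m n s v = patt m n s (fun k => w k + v k) := by
  ext i j
  simp only [Matrix.add_apply, patt_apply]
  split_ifs <;> simp

lemma patt_zero {m n s : ℕ} : (patt m n s (fun _ => (0 : R))) = 0 := by
  ext i j; simp [patt_apply]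

lemma patt_eq_diagonal {n s : ℕ} (w : ℕ → R) :
    patt n n s w = Matrix.diagonal (fun i : Fin n => if (i : ℕ) < s then w i else 0) := by
  ext i j
  simp only [patt_apply, Matrix.diagonal_apply]
  by_cases hij : i = j
  · subst hij; simp
  · have : (i : ℕ) ≠ (j : ℕ) := fun h => hij (by ext; exact h)
    simp [hij, this]

lemma patt_eq_diagonal' {n : ℕ} (w : ℕ → R) :
    patt n n n w = Matrix.diagonal (fun i : Fin n => w i) := by
  rw [patt_eq_diagonal]
  refine congrArg _ (funext fun i => ?_)
  simp [i.isLt]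

lemma smul_patt {m n s : ℕ} (c : R) (w : ℕ → R) :
    c • patt m n s w = patt m n s (fun k => c * w k) := by
  ext i j
  simp only [Matrix.smul_apply, patt_apply, smul_eq_mul]
  split_ifs <;> simp

lemma patt_map {m n s : ℕ} {S : Type*} [CommRing S] (f : R → S) (hf : f 0 = 0) (w : ℕ → R) :
    (patt m n s w).map f = patt m n s (fun k => f (w k)) := by
  ext i j
  simp only [Matrix.map_apply, patt_apply]
  split_ifs <;> simp [hf]



variable {p : ℕ} [Fact p.Prime]

/-- Integer lift of an element of `ZMod p`. -/
noncomputable def zlift (x : ZMod p) : ℤ := (x.val : ℤ)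

lemma cast_zlift (x : ZMod p) : ((zlift x : ℤ) : ZMod p) = x := by
  have : p ≠ 0 := (Fact.out : p.Prime).ne_zero
  simp [zlift, ZMod.natCast_val, ZMod.cast_id]

lemma zlift_zero : zlift (0 : ZMod p) = 0 := by
  simp [zlift, ZMod.val_zero]

/-- A matrix over `ZMod p` is liftable if it is the reduction of an
integer matrix with unit determinant. -/
def Liftable {ι : Type*} [Fintype ι] [DecidableEq ι] (F : Matrix ι ι (ZMod p)) : Prop :=
  ∃ F' : Matrix ι ι ℤ, IsUnit F'.det ∧ F'.map (Int.cast : ℤ → ZMod p) = F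

lemma liftable_one {ι : Type*} [Fintype ι] [DecidableEq ι] :
    Liftable (1 : Matrix ι ι (ZMod p)) :=
  ⟨1, by simp, by simp [Matrix.map_one]⟩

lemma Liftable.mul {ι : Type*} [Fintype ι] [DecidableEq ι]
    {F G : Matrix ι ι (ZMod p)} (hF : Liftable F) (hG : Liftable G) :
    Liftable (F * G) := by
  obtain ⟨F', hF1, hF2⟩ := hF
  obtain ⟨G', hG1, hG2⟩ := hG
  refine ⟨F' * G', by simpa [Matrix.det_mul] using hF1.mul hG1, ?_⟩
  have : (F' * G').map (Int.cast : ℤ → ZMod p)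
      = F'.map (Int.cast : ℤ → ZMod p) * G'.map (Int.cast : ℤ → ZMod p) :=
    Matrix.map_mul (f := Int.castRingHom (ZMod p))
  rw [this, hF2, hG2]

lemma liftable_perm_left {ι : Type*} [Fintype ι] [DecidableEq ι] (σ : Equiv.Perm ι) :
    Liftable ((1 : Matrix ι ι (ZMod p)).submatrix σ id) := by
  refine ⟨(1 : Matrix ι ι ℤ).submatrix σ id, ?_, ?_⟩
  · rw [Matrix.det_permute]
    simp
  · rw [← Matrix.submatrix_map]
    congr 1
    simp [Matrix.map_one]

lemma liftable_perm_right {ι : Type*} [Fintype ι] [DecidableEq ι] (σ : Equiv.Perm ι) :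
    Liftable ((1 : Matrix ι ι (ZMod p)).submatrix id σ) := by
  refine ⟨(1 : Matrix ι ι ℤ).submatrix id σ, ?_, ?_⟩
  · rw [Matrix.det_permute']
    simp
  · rw [← Matrix.submatrix_map]
    congr 1
    simp [Matrix.map_one]

/-- column clearing matrix (lower unitriangular). -/
lemma liftable_colClear {m : ℕ} (c : Fin (m + 1) → ZMod p) :
    Liftable (1 + Matrix.of fun i k => if k = 0 ∧ i ≠ 0 then c i else 0) := by
  refine ⟨1 + Matrix.of fun i k => if k = 0 ∧ i ≠ 0 then zlift (c i) else 0, ?_, ?_⟩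
  · have h : Matrix.BlockTriangular
        (1 + Matrix.of fun i k : Fin (m+1) => if k = 0 ∧ i ≠ 0 then zlift (c i) else 0)
        OrderDual.toDual := by
      intro i j hij
      have hij' : i < j := hij
      have h1 : i ≠ j := ne_of_lt hij'
      have h2 : ¬(j = 0 ∧ i ≠ 0) := by
        rintro ⟨rfl, -⟩
        exact absurd hij' (by simp [Fin.lt_def])
      simp [Matrix.one_apply, h1, h2]
    rw [Matrix.det_of_lowerTriangular _ h]
    have : ∀ i : Fin (m+1),
        (1 + Matrix.of fun i k : Fin (m+1) => if k = 0 ∧ i ≠ 0 then zlift (c i) else 0) i i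
          = 1 := by
      intro i; simp [Matrix.one_apply]
    rw [Finset.prod_congr rfl fun i _ => this i]
    simp
  · ext i k
    by_cases h : k = 0 ∧ i ≠ 0 <;>
      simp [Matrix.one_apply, h, cast_zlift, apply_ite (Int.cast : ℤ → ZMod p)]

/-- row clearing matrix (upper unitriangular). -/
lemma liftable_rowClear {n : ℕ} (d : Fin (n + 1) → ZMod p) :
    Liftable (1 + Matrix.of fun k j => if k = 0 ∧ j ≠ 0 then d j else 0) := by
  refine ⟨1 + Matrix.of fun k j => if k = 0 ∧ j ≠ 0 then zlift (d j) else 0, ?_, ?_⟩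
  · have h : Matrix.BlockTriangular
        (1 + Matrix.of fun k j : Fin (n+1) => if k = 0 ∧ j ≠ 0 then zlift (d j) else 0)
        id := by
      intro i j hij
      have hij' : (j : Fin (n+1)) < i := hij
      have h1 : i ≠ j := (ne_of_lt hij').symm
      have h2 : ¬(i = 0 ∧ j ≠ 0) := by
        rintro ⟨rfl, -⟩
        exact absurd hij' (by simp [Fin.lt_def])
      simp [Matrix.one_apply, h1, h2]
    rw [Matrix.det_of_upperTriangular h]
    have : ∀ i : Fin (n+1),
        (1 + Matrix.of fun k j : Fin (n+1) => if k = 0 ∧ j ≠ 0 then zlift (d j) else 0) i i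
          = 1 := by
      intro i; simp [Matrix.one_apply]
    rw [Finset.prod_congr rfl fun i _ => this i]
    simp
  · ext i k
    by_cases h : i = 0 ∧ k ≠ 0 <;>
      simp [Matrix.one_apply, h, cast_zlift, apply_ite (Int.cast : ℤ → ZMod p)]



variable {R : Type*} [CommRing R]

lemma perm_mul {m n : ℕ} (σ : Equiv.Perm (Fin m)) (A : Matrix (Fin m) (Fin n) R) :
    (1 : Matrix (Fin m) (Fin m) R).submatrix σ id * A = A.submatrix σ id := by
  ext i j
  rw [Matrix.mul_apply]
  simp [Matrix.submatrix_apply, Matrix.one_apply]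

lemma mul_perm {m n : ℕ} (τ : Equiv.Perm (Fin n)) (A : Matrix (Fin m) (Fin n) R) :
    A * (1 : Matrix (Fin n) (Fin n) R).submatrix id τ = A.submatrix id τ := by
  ext i j
  rw [Matrix.mul_apply]
  simp [Matrix.submatrix_apply, Matrix.one_apply]

/-- Extend a matrix to one more row and column, with a `1` in the new corner. -/
def ext1 {m n : ℕ} (F : Matrix (Fin m) (Fin n) R) : Matrix (Fin (m+1)) (Fin (n+1)) R :=
  Matrix.of fun i j =>
    Fin.cases (Fin.cases 1 (fun _ => 0) j) (fun i' => Fin.cases 0 (fun j' => F i' j') j) i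

@[simp] lemma ext1_zero_zero {m n : ℕ} (F : Matrix (Fin m) (Fin n) R) :
    ext1 F 0 0 = 1 := rfl

@[simp] lemma ext1_zero_succ {m n : ℕ} (F : Matrix (Fin m) (Fin n) R) (j : Fin n) :
    ext1 F 0 j.succ = 0 := by simp [ext1]

@[simp] lemma ext1_succ_zero {m n : ℕ} (F : Matrix (Fin m) (Fin n) R) (i : Fin m) :
    ext1 F i.succ 0 = 0 := by simp [ext1]

@[simp] lemma ext1_succ_succ {m n : ℕ} (F : Matrix (Fin m) (Fin n) R) (i : Fin m) (j : Fin n) :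
    ext1 F i.succ j.succ = F i j := by simp [ext1]

lemma ext1_submatrix {m n : ℕ} (F : Matrix (Fin m) (Fin n) R) :
    (ext1 F).submatrix Fin.succ Fin.succ = F := by
  ext i j; simp

lemma det_ext1 {m : ℕ} (F : Matrix (Fin m) (Fin m) R) : (ext1 F).det = F.det := by
  rw [Matrix.det_succ_row_zero]
  rw [Finset.sum_eq_single 0]
  · simp [ext1_submatrix, Fin.succAbove_zero]
  · intro j _ hj
    obtain ⟨j', rfl⟩ := Fin.exists_succ_eq.mpr hj
    simp
  · intro h; exact absurd (Finset.mem_univ _) h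

lemma map_ext1 {m n : ℕ} {S : Type*} [CommRing S] (f : R → S) (h0 : f 0 = 0) (h1 : f 1 = 1)
    (F : Matrix (Fin m) (Fin n) R) :
    (ext1 F).map f = ext1 (F.map f) := by
  ext i j
  refine Fin.cases ?_ (fun i' => ?_) i <;> refine Fin.cases ?_ (fun j' => ?_) j <;>
    simp [h0, h1]


section Elim

variable {p : ℕ} [Fact p.Prime]

lemma Liftable.ext1 {m : ℕ} {F : Matrix (Fin m) (Fin m) (ZMod p)} (hF : Liftable F) :
    Liftable (StackedSmith.ext1 F) := by
  obtain ⟨F', h1, h2⟩ := hF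
  refine ⟨StackedSmith.ext1 F', by rwa [det_ext1], ?_⟩
  rw [map_ext1 (Int.cast : ℤ → ZMod p) (by simp) (by simp)]
  exact congrArg _ h2

lemma colClear_mul {m n : ℕ} {K : Type*} [Field K] (c : Fin (m+1) → K)
    (M : Matrix (Fin (m+1)) (Fin n) K) :
    (1 + Matrix.of fun (i k : Fin (m+1)) => if k = 0 ∧ i ≠ 0 then c i else 0) * M
      = Matrix.of fun (i : Fin (m+1)) (j : Fin n) =>
          M i j + if i ≠ 0 then c i * M 0 j else 0 := by
  ext i j
  rw [Matrix.add_mul, Matrix.one_mul, Matrix.add_apply, Matrix.mul_apply, Fin.sum_univ_succ]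
  simp [Fin.succ_ne_zero, ite_and, apply_ite (· * M 0 j)]

lemma mul_rowClear {m n : ℕ} {K : Type*} [Field K] (d : Fin (n+1) → K)
    (M : Matrix (Fin m) (Fin (n+1)) K) :
    M * (1 + Matrix.of fun (k j : Fin (n+1)) => if k = 0 ∧ j ≠ 0 then d j else 0)
      = Matrix.of fun (i : Fin m) (j : Fin (n+1)) =>
          M i j + if j ≠ 0 then M i 0 * d j else 0 := by
  ext i j
  rw [Matrix.mul_add, Matrix.mul_one, Matrix.add_apply, Matrix.mul_apply, Fin.sum_univ_succ]
  simp [Fin.succ_ne_zero, ite_and, apply_ite (M i 0 * ·), mul_ite]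

lemma elim : ∀ (m n : ℕ) (A : Matrix (Fin m) (Fin n) (ZMod p)),
    ∃ (F : Matrix (Fin m) (Fin m) (ZMod p)) (G : Matrix (Fin n) (Fin n) (ZMod p)) (w : ℕ → ZMod p),
      Liftable F ∧ Liftable G ∧
        F * A * G
          = Matrix.of fun (i : Fin m) (j : Fin n) => if (i : ℕ) = (j : ℕ) then w (i : ℕ) else 0
  | 0, n, A =>
      ⟨1, 1, 0, liftable_one, liftable_one, by ext i j; exact i.elim0⟩
  | (m+1), 0, A =>
      ⟨1, 1, 0, liftable_one, liftable_one, by ext i j; exact j.elim0⟩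
  | (m+1), (n+1), A => by
      by_cases hA : A = 0
      · refine ⟨1, 1, 0, liftable_one, liftable_one, ?_⟩
        ext i j
        simp [hA]
      · have hex : ∃ i₀ j₀, A i₀ j₀ ≠ 0 := by
          by_contra h
          push_neg at h
          exact hA (by ext i j; simpa using h i j)
        obtain ⟨i₀, j₀, hij₀⟩ := hex
        set σ : Equiv.Perm (Fin (m+1)) := Equiv.swap i₀ 0 with hσ
        set τ : Equiv.Perm (Fin (n+1)) := Equiv.swap j₀ 0 with hτ
        set Pσ : Matrix (Fin (m+1)) (Fin (m+1)) (ZMod p) :=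
          (1 : Matrix (Fin (m+1)) (Fin (m+1)) (ZMod p)).submatrix σ id with hPσ
        set Pτ : Matrix (Fin (n+1)) (Fin (n+1)) (ZMod p) :=
          (1 : Matrix (Fin (n+1)) (Fin (n+1)) (ZMod p)).submatrix id τ with hPτ
        set A₁ : Matrix (Fin (m+1)) (Fin (n+1)) (ZMod p) := A.submatrix σ τ with hA₁
        have ha : A₁ 0 0 ≠ 0 := by
          simpa [hA₁, hσ, hτ, Matrix.submatrix_apply, Equiv.swap_apply_right] using hij₀
        set a : ZMod p := A₁ 0 0 with haa
        set c : Fin (m+1) → ZMod p := fun i => -(A₁ i 0) / a with hc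
        set d : Fin (n+1) → ZMod p := fun j => -(A₁ 0 j) / a with hd
        set L : Matrix (Fin (m+1)) (Fin (m+1)) (ZMod p) :=
          1 + Matrix.of fun (i k : Fin (m+1)) => if k = 0 ∧ i ≠ 0 then c i else 0 with hL
        set Rt : Matrix (Fin (n+1)) (Fin (n+1)) (ZMod p) :=
          1 + Matrix.of fun (k j : Fin (n+1)) => if k = 0 ∧ j ≠ 0 then d j else 0 with hRt
        set A₂ : Matrix (Fin (m+1)) (Fin (n+1)) (ZMod p) := L * A₁ * Rt with hA₂
        have hLA : ∀ i j, (L * A₁) i j = A₁ i j + if i ≠ 0 then c i * A₁ 0 j else 0 := by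
          intro i j; rw [hL, colClear_mul]; rfl
        have hLA0 : ∀ j, (L * A₁) 0 j = A₁ 0 j := by
          intro j; rw [hLA]; simp
        have hLAc0 : ∀ i, i ≠ 0 → (L * A₁) i 0 = 0 := by
          intro i hi
          rw [hLA, if_pos hi, hc]
          field_simp
          rw [haa]; ring
        have hA₂e : ∀ i j, A₂ i j = (L * A₁) i j + if j ≠ 0 then (L * A₁) i 0 * d j else 0 := by
          intro i j; rw [hA₂, hRt, mul_rowClear]; rfl
        have hA₂00 : A₂ 0 0 = a := by rw [hA₂e]; simp [hLA0]; exact haa.symm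
        have hA₂r0 : ∀ j, j ≠ 0 → A₂ 0 j = 0 := by
          intro j hj
          rw [hA₂e, if_pos hj, hLA0, hLA0, hd]
          field_simp
          rw [haa]
          ring
        have hA₂c0 : ∀ i, i ≠ 0 → A₂ i 0 = 0 := by
          intro i hi
          rw [hA₂e, if_neg (by simp), hLAc0 i hi, add_zero]
        obtain ⟨F₃, G₃, w₃, hF₃, hG₃, h₃⟩ := elim m n (A₂.submatrix Fin.succ Fin.succ)
        refine ⟨StackedSmith.ext1 F₃ * L * Pσ, Pτ * Rt * StackedSmith.ext1 G₃,
          fun k => Nat.casesOn k a w₃, ?_, ?_, ?_⟩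
        · exact (hF₃.ext1.mul (liftable_colClear c)).mul (liftable_perm_left σ)
        · exact ((liftable_perm_right τ).mul (liftable_rowClear d)).mul hG₃.ext1
        · have hperm : Pσ * A * Pτ = A₁ := by
            rw [hPσ, hPτ, perm_mul, mul_perm, Matrix.submatrix_submatrix]
            rfl
          have hassoc : StackedSmith.ext1 F₃ * L * Pσ * A * (Pτ * Rt * StackedSmith.ext1 G₃)
              = StackedSmith.ext1 F₃ * (L * (Pσ * A * Pτ) * Rt) * StackedSmith.ext1 G₃ := by
            simp only [Matrix.mul_assoc]
          rw [hassoc, hperm, ← hA₂]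
          have hrow0 : ∀ k, (StackedSmith.ext1 F₃ * A₂) 0 k = A₂ 0 k := by
            intro k
            rw [Matrix.mul_apply, Fin.sum_univ_succ]
            simp
          have hrowS : ∀ (i' : Fin m) k, (StackedSmith.ext1 F₃ * A₂) i'.succ k
              = ∑ k', F₃ i' k' * A₂ k'.succ k := by
            intro i' k
            rw [Matrix.mul_apply, Fin.sum_univ_succ]
            simp
          ext i j
          rw [Matrix.mul_apply, Matrix.of_apply]
          refine Fin.cases ?_ (fun i' => ?_) i
          · refine Fin.cases ?_ (fun j' => ?_) j
            · rw [Fin.sum_univ_succ]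
              simp [hrow0, hA₂00]
            · have hz : ∀ k : Fin (n+1),
                  (StackedSmith.ext1 F₃ * A₂) 0 k * StackedSmith.ext1 G₃ k j'.succ = 0 := by
                intro k
                refine Fin.cases ?_ (fun k' => ?_) k
                · simp
                · rw [hrow0, hA₂r0 _ (Fin.succ_ne_zero k'), zero_mul]
              rw [Finset.sum_eq_zero fun k _ => hz k]
              simp
          · refine Fin.cases ?_ (fun j' => ?_) j
            · have hz : ∀ k : Fin (n+1),
                  (StackedSmith.ext1 F₃ * A₂) i'.succ k * StackedSmith.ext1 G₃ k 0 = 0 := by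
                intro k
                refine Fin.cases ?_ (fun k' => ?_) k
                · rw [hrowS, Finset.sum_eq_zero fun k' _ => ?_, zero_mul]
                  rw [hA₂c0 _ (Fin.succ_ne_zero k'), mul_zero]
                · simp
              rw [Finset.sum_eq_zero fun k _ => hz k]
              simp [Fin.succ_ne_zero]
            · rw [Fin.sum_univ_succ, ext1_zero_succ, mul_zero, zero_add]
              have heq : ∑ k' : Fin n, (StackedSmith.ext1 F₃ * A₂) i'.succ k'.succ
                    * StackedSmith.ext1 G₃ k'.succ j'.succ
                  = (F₃ * A₂.submatrix Fin.succ Fin.succ * G₃) i' j' := by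
                rw [Matrix.mul_apply]
                refine Finset.sum_congr rfl fun k' _ => ?_
                rw [hrowS, ext1_succ_succ, Matrix.mul_apply]
                rfl
              rw [heq, h₃]
              simp
  decreasing_by all_goals omega

end Elim

section Sorting

lemma exists_sort_equiv {M0 r : ℕ} (P : Fin M0 → Prop) [DecidablePred P]
    (hcard : Fintype.card {k // P k} = r) :
    ∃ ρ : Equiv.Perm (Fin M0), ∀ k, P (ρ k) ↔ (k : ℕ) < r := by
  have hr : r ≤ M0 := by
    calc r = Fintype.card {k // P k} := hcard.symm
    _ ≤ Fintype.card (Fin M0) := Fintype.card_subtype_le _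
    _ = M0 := Fintype.card_fin _
  have hcard' : Fintype.card {k // ¬ P k} = M0 - r := by
    rw [Fintype.card_subtype_compl, hcard, Fintype.card_fin]
  let e₁ : Fin r ≃ {k // P k} := (Fintype.equivFinOfCardEq hcard).symm
  let e₂ : Fin (M0 - r) ≃ {k // ¬ P k} := (Fintype.equivFinOfCardEq hcard').symm
  let eq0 : Fin M0 ≃ Fin (r + (M0 - r)) := finCongr (by omega)
  refine ⟨((eq0.trans finSumFinEquiv.symm).trans (e₁.sumCongr e₂)).trans (Equiv.sumCompl P),
    fun k => ?_⟩
  by_cases hk : (k : ℕ) < r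
  · have h1 : finSumFinEquiv.symm (eq0 k) = Sum.inl ⟨(k : ℕ), hk⟩ := by
      rw [Equiv.symm_apply_eq, finSumFinEquiv_apply_left]
      ext
      simp [eq0]
    simp only [Equiv.trans_apply, h1, Equiv.sumCongr_apply, Sum.map_inl,
      Equiv.sumCompl_apply_inl]
    simpa [hk] using (e₁ ⟨(k : ℕ), hk⟩).2
  · have h1 : finSumFinEquiv.symm (eq0 k) = Sum.inr ⟨(k : ℕ) - r, by omega⟩ := by
      rw [Equiv.symm_apply_eq, finSumFinEquiv_apply_right]
      ext
      simp [eq0]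
      omega
    simp only [Equiv.trans_apply, h1, Equiv.sumCongr_apply, Sum.map_inr,
      Equiv.sumCompl_apply_inr]
    simpa [hk] using (e₂ ⟨(k : ℕ) - r, by omega⟩).2

/-- Extend a permutation of `Fin M0` to `Fin m` fixing everything above `M0`. -/
def extendPerm {M0 m : ℕ} (ρ : Equiv.Perm (Fin M0)) (h : M0 ≤ m) : Equiv.Perm (Fin m) where
  toFun i := if hi : (i : ℕ) < M0 then Fin.castLE h (ρ ⟨(i : ℕ), hi⟩) else i
  invFun i := if hi : (i : ℕ) < M0 then Fin.castLE h (ρ.symm ⟨(i : ℕ), hi⟩) else i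
  left_inv i := by
    simp only []
    by_cases hi : (i : ℕ) < M0
    · have h2 : ((Fin.castLE h (ρ ⟨(i : ℕ), hi⟩) : Fin m) : ℕ) < M0 := by
        simpa using (ρ ⟨(i : ℕ), hi⟩).isLt
      simp only [dif_pos hi, dif_pos h2]
      have h3 : (⟨((Fin.castLE h (ρ ⟨(i : ℕ), hi⟩) : Fin m) : ℕ), h2⟩ : Fin M0)
          = ρ ⟨(i : ℕ), hi⟩ := by ext; simp
      rw [h3, Equiv.symm_apply_apply]
      ext
      simp
    · simp only [dif_neg hi]
  right_inv i := by
    simp only []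
    by_cases hi : (i : ℕ) < M0
    · have h2 : ((Fin.castLE h (ρ.symm ⟨(i : ℕ), hi⟩) : Fin m) : ℕ) < M0 := by
        simpa using (ρ.symm ⟨(i : ℕ), hi⟩).isLt
      simp only [dif_pos hi, dif_pos h2]
      have h3 : (⟨((Fin.castLE h (ρ.symm ⟨(i : ℕ), hi⟩) : Fin m) : ℕ), h2⟩ : Fin M0)
          = ρ.symm ⟨(i : ℕ), hi⟩ := by ext; simp
      rw [h3, Equiv.apply_symm_apply]
      ext
      simp
    · simp only [dif_neg hi]

lemma extendPerm_val {M0 m : ℕ} (ρ : Equiv.Perm (Fin M0)) (h : M0 ≤ m) (i : Fin m) :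
    ((extendPerm ρ h i : Fin m) : ℕ)
      = if hi : (i : ℕ) < M0 then ((ρ ⟨(i : ℕ), hi⟩ : Fin M0) : ℕ) else (i : ℕ) := by
  by_cases hi : (i : ℕ) < M0 <;> simp [extendPerm, Equiv.coe_fn_mk, hi]

end Sorting

section RankPatt

variable {K : Type*} [Field K] [DecidableEq K]

lemma rank_patt_le {m n M0 : ℕ} (hm : M0 ≤ m) (hn : M0 ≤ n) (w : ℕ → K) :
    (patt m n M0 w).rank = (patt M0 M0 M0 w).rank := by
  have h1 : patt m M0 M0 (1 : ℕ → K) * patt M0 M0 M0 w * patt M0 n M0 (1 : ℕ → K)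
      = patt m n M0 w := by
    rw [patt_mul_patt, patt_mul_patt]
    rw [show min (min (min (min M0 M0) M0) M0) M0 = M0 by simp]
    exact patt_congr fun k _ => by simp [Pi.one_apply]
  have h2 : patt M0 m M0 (1 : ℕ → K) * patt m n M0 w * patt n M0 M0 (1 : ℕ → K)
      = patt M0 M0 M0 w := by
    rw [patt_mul_patt, patt_mul_patt]
    rw [show min (min (min (min M0 M0) m) M0) n = M0 by omega]
    exact patt_congr fun k _ => by simp [Pi.one_apply]
  apply le_antisymm
  · rw [← h1]
    exact (Matrix.rank_mul_le_left _ _).trans (Matrix.rank_mul_le_right _ _)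
  · conv_lhs => rw [← h2]
    exact (Matrix.rank_mul_le_left _ _).trans (Matrix.rank_mul_le_right _ _)

lemma rank_patt_eq_card {m n M0 : ℕ} (hm : M0 ≤ m) (hn : M0 ≤ n) (w : ℕ → K) :
    (patt m n M0 w).rank = Fintype.card {i : Fin M0 // w (i : ℕ) ≠ 0} := by
  rw [rank_patt_le hm hn, patt_eq_diagonal', Matrix.rank_diagonal]

end RankPatt

section Main

variable {p : ℕ} [Fact p.Prime]

lemma Liftable.isUnit_det {m : ℕ} {F : Matrix (Fin m) (Fin m) (ZMod p)} (hF : Liftable F) :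
    IsUnit F.det := by
  obtain ⟨F', h1, h2⟩ := hF
  rw [← h2, show F'.map (Int.cast : ℤ → ZMod p) = F'.map ⇑(Int.castRingHom (ZMod p)) from rfl,
    ← RingHom.mapMatrix_apply, ← RingHom.map_det]
  exact h1.map _

lemma int_decompose {m n : ℕ} {M : Matrix (Fin m) (Fin n) ℤ}
    (h : M.map (Int.cast : ℤ → ZMod p) = 0) : ∃ X, M = (p : ℤ) • X := by
  refine ⟨Matrix.of fun i j => M i j / (p : ℤ), ?_⟩
  ext i j
  have h1 : ((M i j : ℤ) : ZMod p) = 0 := by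
    have := congrFun (congrFun h i) j
    simpa using this
  have h2 : (p : ℤ) ∣ M i j := (ZMod.intCast_zmod_eq_zero_iff_dvd _ p).mp h1
  simp only [Matrix.smul_apply, Matrix.of_apply, smul_eq_mul]
  exact (Int.mul_ediv_cancel' h2).symm

end Main


lemma patt_add_patt_eq_diag {nn s t : ℕ} (f g : ℕ → ℤ) (d : Fin nn → ℤ)
    (hst : ∀ k : Fin nn, (if (k : ℕ) < s then f (k : ℕ) else 0)
        + (if (k : ℕ) < t then g (k : ℕ) else 0) = d k) :
    patt nn nn s f + patt nn nn t g = Matrix.diagonal d := by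
  rw [patt_eq_diagonal, patt_eq_diagonal, Matrix.diagonal_add]
  exact congrArg _ (funext hst)

end StackedSmith

open StackedSmith in
theorem stacked_matrix_smith_form
    (m n p : ℕ) (hp : p.Prime) [Fact p.Prime] (Q : Matrix (Fin m) (Fin n) ℤ)
    (r : ℕ) (hr : r = (Q.map (fun x : ℤ => (x : ZMod p))).rank) :
    ∃ (P : Matrix (Fin m ⊕ Fin n) (Fin m ⊕ Fin n) ℤ) (Q' : Matrix (Fin n) (Fin n) ℤ),
      IsUnit P.det ∧ IsUnit Q'.det ∧
      P * Matrix.fromRows Q ((p : ℤ) • (1 : Matrix (Fin n) (Fin n) ℤ)) * Q' =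
        Matrix.fromRows (0 : Matrix (Fin m) (Fin n) ℤ)
          (Matrix.diagonal fun i : Fin n => if (i : ℕ) < r then 1 else (p : ℤ)) := by
  classical
  set A : Matrix (Fin m) (Fin n) (ZMod p) := Q.map (fun x : ℤ => (x : ZMod p)) with hA
  obtain ⟨F₀, G₀, w, hF₀, hG₀, hFAG⟩ := StackedSmith.elim (p := p) m n A
  set M0 := min m n with hM0
  have hE₀ : (Matrix.of fun (i : Fin m) (j : Fin n) =>
      if (i : ℕ) = (j : ℕ) then w (i : ℕ) else 0) = patt m n M0 w := by
    ext i j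
    simp only [Matrix.of_apply, patt_apply]
    by_cases hij : (i : ℕ) = (j : ℕ)
    · have hlt : (i : ℕ) < M0 := lt_min i.isLt (hij ▸ j.isLt)
      rw [if_pos hij, if_pos ⟨hij, hlt⟩]
    · simp [hij]
  rw [hE₀] at hFAG
  have hrank : r = (patt m n M0 w).rank := by
    have h1 : ((F₀ * A) * G₀).rank = (F₀ * A).rank :=
      Matrix.rank_mul_eq_left_of_isUnit_det G₀ (F₀ * A) hG₀.isUnit_det
    have h2 : (F₀ * A).rank = A.rank :=
      Matrix.rank_mul_eq_right_of_isUnit_det F₀ A hF₀.isUnit_det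
    rw [hr, ← hFAG, h1, h2]
  have hcard : Fintype.card {k : Fin M0 // w (k : ℕ) ≠ 0} = r := by
    rw [hrank, rank_patt_eq_card (min_le_left m n) (min_le_right m n)]
  have hrM0 : r ≤ M0 := by
    rw [← hcard]
    calc Fintype.card {k : Fin M0 // w (k : ℕ) ≠ 0} ≤ Fintype.card (Fin M0) :=
        Fintype.card_subtype_le _
    _ = M0 := Fintype.card_fin _
  have hrm : r ≤ m := hrM0.trans (min_le_left m n)
  have hrn : r ≤ n := hrM0.trans (min_le_right m n)
  obtain ⟨ρ, hρ⟩ := exists_sort_equiv (fun k : Fin M0 => w (k : ℕ) ≠ 0) hcard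
  set σm := extendPerm ρ (min_le_left m n) with hσm
  set σn := extendPerm ρ (min_le_right m n) with hσn
  set ws : ℕ → ZMod p := fun k =>
    if h : k < M0 then w ((ρ ⟨k, h⟩ : Fin M0) : ℕ) else 0 with hwsdef
  have hws : ∀ k, k < r → ws k ≠ 0 := by
    intro k hk
    have hkM : k < M0 := lt_of_lt_of_le hk hrM0
    simp only [hwsdef, dif_pos hkM]
    exact (hρ ⟨k, hkM⟩).mpr hk
  have hsorted : (patt m n M0 w).submatrix σm σn = patt m n r ws := by
    ext i j
    rw [Matrix.submatrix_apply, patt_apply, patt_apply]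
    have hvm := extendPerm_val ρ (min_le_left m n) i
    have hvn := extendPerm_val ρ (min_le_right m n) j
    by_cases hi : (i : ℕ) < M0 <;> by_cases hj : (j : ℕ) < M0
    · rw [dif_pos hi] at hvm
      rw [dif_pos hj] at hvn
      by_cases hij : (i : ℕ) = (j : ℕ)
      · have hsame : (⟨(i : ℕ), hi⟩ : Fin M0) = ⟨(j : ℕ), hj⟩ := by
          ext; exact hij
        have heq : ((σm i : Fin m) : ℕ) = ((σn j : Fin n) : ℕ) := by
          rw [hvm, hvn, hsame]
        have hltM : ((σm i : Fin m) : ℕ) < M0 := by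
          rw [hvm]; exact (ρ ⟨(i : ℕ), hi⟩).isLt
        rw [if_pos ⟨heq, hltM⟩]
        rw [hvm]
        by_cases hir : (i : ℕ) < r
        · rw [if_pos ⟨hij, hir⟩]
          simp only [hwsdef, dif_pos hi]
        · rw [if_neg (fun hcon => hir hcon.2)]
          by_contra hne
          exact hir ((hρ ⟨(i : ℕ), hi⟩).mp hne)
      · have hne : ¬ (((σm i : Fin m) : ℕ) = ((σn j : Fin n) : ℕ)) := by
          rw [hvm, hvn]
          intro hcon
          apply hij
          have : (⟨(i : ℕ), hi⟩ : Fin M0) = ⟨(j : ℕ), hj⟩ :=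
            ρ.injective (by ext; exact hcon)
          simpa using congrArg Fin.val this
        rw [if_neg (fun hcon => hne hcon.1), if_neg (fun hcon => hij hcon.1)]
    · rw [dif_pos hi] at hvm
      rw [dif_neg hj] at hvn
      have hne : ¬ (((σm i : Fin m) : ℕ) = ((σn j : Fin n) : ℕ)) := by
        rw [hvm, hvn]
        intro hcon
        exact hj (hcon ▸ (ρ ⟨(i : ℕ), hi⟩).isLt)
      have hne2 : ¬ ((i : ℕ) = (j : ℕ)) := fun hcon => hj (hcon ▸ hi)
      rw [if_neg (fun hcon => hne hcon.1), if_neg (fun hcon => hne2 hcon.1)]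
    · rw [dif_neg hi] at hvm
      rw [dif_pos hj] at hvn
      have hne : ¬ (((σm i : Fin m) : ℕ) = ((σn j : Fin n) : ℕ)) := by
        rw [hvm, hvn]
        intro hcon
        exact hi (hcon ▸ (ρ ⟨(j : ℕ), hj⟩).isLt)
      have hne2 : ¬ ((i : ℕ) = (j : ℕ)) := fun hcon => hi (hcon ▸ hj)
      rw [if_neg (fun hcon => hne hcon.1), if_neg (fun hcon => hne2 hcon.1)]
    · rw [dif_neg hi] at hvm
      rw [dif_neg hj] at hvn
      have h3 : ¬ (((σm i : Fin m) : ℕ) = ((σn j : Fin n) : ℕ) ∧ ((σm i : Fin m) : ℕ) < M0) := by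
        rintro ⟨-, hcon⟩
        rw [hvm] at hcon
        exact hi hcon
      have h4 : ¬ ((i : ℕ) = (j : ℕ) ∧ (i : ℕ) < r) := by
        rintro ⟨-, hcon⟩
        exact hi (lt_of_lt_of_le hcon hrM0)
      rw [if_neg h3, if_neg h4]
  have hKfinal : ((1 : Matrix (Fin m) (Fin m) (ZMod p)).submatrix σm id * F₀) * A
      * (G₀ * (1 : Matrix (Fin n) (Fin n) (ZMod p)).submatrix id σn) = patt m n r ws := by
    have hstep : ((1 : Matrix (Fin m) (Fin m) (ZMod p)).submatrix σm id * F₀) * A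
        * (G₀ * (1 : Matrix (Fin n) (Fin n) (ZMod p)).submatrix id σn)
        = (1 : Matrix (Fin m) (Fin m) (ZMod p)).submatrix σm id * (F₀ * A * G₀)
          * (1 : Matrix (Fin n) (Fin n) (ZMod p)).submatrix id σn := by
      simp only [Matrix.mul_assoc]
    rw [hstep, hFAG, perm_mul, mul_perm, Matrix.submatrix_submatrix, ← hsorted]
    rfl
  obtain ⟨Ft, hFtdet, hFtmap⟩ := (liftable_perm_left (p := p) σm).mul hF₀
  obtain ⟨Gt, hGtdet, hGtmap⟩ := hG₀.mul (liftable_perm_right (p := p) σn)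
  set u : ℕ → ℤ := fun k => zlift (ws k) with hudef
  set E : Matrix (Fin m) (Fin n) ℤ := patt m n r u with hE
  have hEmap : E.map (Int.cast : ℤ → ZMod p) = patt m n r ws := by
    rw [hE, patt_map (Int.cast : ℤ → ZMod p) (by simp)]
    exact patt_congr fun k _ => cast_zlift _
  have hmod : (Ft * Q * Gt).map (Int.cast : ℤ → ZMod p) = patt m n r ws := by
    have hmm : (Ft * Q * Gt).map ⇑(Int.castRingHom (ZMod p))
        = (Ft.map ⇑(Int.castRingHom (ZMod p))) * (Q.map ⇑(Int.castRingHom (ZMod p)))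
          * (Gt.map ⇑(Int.castRingHom (ZMod p))) := by
      rw [Matrix.map_mul, Matrix.map_mul]
    rw [show (Int.cast : ℤ → ZMod p) = ⇑(Int.castRingHom (ZMod p)) from rfl, hmm]
    rw [show Gt.map ⇑(Int.castRingHom (ZMod p)) = G₀ *
      (1 : Matrix (Fin n) (Fin n) (ZMod p)).submatrix id σn from hGtmap]
    rw [show Ft.map ⇑(Int.castRingHom (ZMod p)) = (1 : Matrix (Fin m) (Fin m) (ZMod p)).submatrix σm id * F₀ from hFtmap]
    exact hKfinal
  have hsub : ((Ft * Q * Gt - E).map (Int.cast : ℤ → ZMod p)) = 0 := by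
    ext i j
    simp only [Matrix.map_apply, Matrix.sub_apply, Int.cast_sub, Matrix.zero_apply]
    have h1 : (((Ft * Q * Gt) i j : ℤ) : ZMod p) = patt m n r ws i j := by
      rw [← hmod]; rfl
    have h2 : ((E i j : ℤ) : ZMod p) = patt m n r ws i j := by
      rw [← hEmap]; rfl
    rw [h1, h2, sub_self]
  obtain ⟨X, hX⟩ := int_decompose hsub
  have hdecomp : Ft * Q * Gt = E + (p : ℤ) • X := by
    have := sub_eq_iff_eq_add.mp hX
    rw [this, add_comm]
  have hcop : ∀ k : ℕ, ∃ x y : ℤ, (k < r → x * u k + y * (p : ℤ) = 1) := by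
    intro k
    by_cases hk : k < r
    · have hwk : ws k ≠ 0 := hws k hk
      have hdvd : ¬ ((p : ℤ) ∣ u k) := by
        intro hd
        apply hwk
        have h0 : ((u k : ℤ) : ZMod p) = 0 := (ZMod.intCast_zmod_eq_zero_iff_dvd _ p).mpr hd
        rwa [hudef, cast_zlift] at h0
      have hco : IsCoprime (u k) (p : ℤ) := by
        rw [Int.isCoprime_iff_gcd_eq_one]
        have hnd : ¬ ((p : ℕ) ∣ (u k).natAbs) := by
          intro hd
          exact hdvd (Int.natAbs_dvd.mp (Int.natCast_dvd_natCast.mpr hd))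
        have := (Nat.Prime.coprime_iff_not_dvd hp).mpr hnd
        simpa [Int.gcd, Nat.coprime_comm.mp this] using (Nat.coprime_comm.mp this)
      obtain ⟨x, y, hxy⟩ := hco
      exact ⟨x, y, fun _ => hxy⟩
    · exact ⟨0, 0, fun hcon => absurd hcon hk⟩
  choose xx yy hxy using hcop
  -- integer matrices
  have hGiGt : Gt⁻¹ * Gt = 1 := Matrix.nonsing_inv_mul Gt hGtdet
  have hGidet : IsUnit (Gt⁻¹).det :=
    IsUnit.of_mul_eq_one Gt.det (by rw [← Matrix.det_mul, hGiGt, Matrix.det_one])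
  set D₁ : Matrix (Fin m) (Fin m) ℤ := patt m m m (fun k => if k < r then -(p : ℤ) else 1)
    with hD₁
  set D₂ : Matrix (Fin n) (Fin n) ℤ := patt n n n (fun k => if k < r then yy k else 1) with hD₂
  set CC : Matrix (Fin n) (Fin m) ℤ := patt n m r xx with hCC
  set D₁' : Matrix (Fin m) (Fin m) ℤ := patt m m m (fun k => if k < r then -(yy k) else 1)
    with hD₁'
  set D₂' : Matrix (Fin n) (Fin n) ℤ := patt n n n (fun k => if k < r then (p : ℤ) else 1)
    with hD₂'
  set P₁ : Matrix (Fin m ⊕ Fin n) (Fin m ⊕ Fin n) ℤ := Matrix.fromBlocks Ft 0 0 Gt⁻¹ with hP₁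
  set P₂ : Matrix (Fin m ⊕ Fin n) (Fin m ⊕ Fin n) ℤ := Matrix.fromBlocks 1 (-X) 0 1 with hP₂
  set P₃ : Matrix (Fin m ⊕ Fin n) (Fin m ⊕ Fin n) ℤ := Matrix.fromBlocks D₁ E CC D₂ with hP₃
  have hTL : D₁ * D₁' + E * CC = 1 := by
    rw [hD₁, hD₁', hE, hCC, patt_mul_patt, patt_mul_patt,
      show min (min m m) m = m from by omega, show min (min r r) n = r from by omega,
      ← Matrix.diagonal_one]
    apply patt_add_patt_eq_diag
    intro k
    by_cases hk : (k : ℕ) < r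
    · have h1 := hxy (k : ℕ) hk
      rw [if_pos (k.isLt), if_pos hk, if_pos hk, if_pos hk]
      linarith
    · rw [if_pos (k.isLt), if_neg hk, if_neg hk, if_neg hk]
      ring
  have hTR : D₁ * E + E * D₂' = 0 := by
    rw [hD₁, hD₂', hE, patt_mul_patt, patt_mul_patt,
      show min (min m r) m = r from by omega, show min (min r n) n = r from by omega,
      patt_add, patt_congr (v := fun _ => (0 : ℤ)) fun k hk => by
        rw [if_pos hk, if_pos hk]; ring]
    exact patt_zero
  have hBL : CC * D₁' + D₂ * CC = 0 := by
    rw [hD₁', hD₂, hCC, patt_mul_patt, patt_mul_patt,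
      show min (min r m) m = r from by omega, show min (min n r) n = r from by omega,
      patt_add, patt_congr (v := fun _ => (0 : ℤ)) fun k hk => by
        rw [if_pos hk, if_pos hk]; ring]
    exact patt_zero
  have hBR : CC * E + D₂ * D₂' = 1 := by
    rw [hD₂, hD₂', hE, hCC, patt_mul_patt, patt_mul_patt,
      show min (min r r) m = r from by omega, show min (min n n) n = n from by omega,
      ← Matrix.diagonal_one]
    apply patt_add_patt_eq_diag
    intro k
    by_cases hk : (k : ℕ) < r
    · have h1 := hxy (k : ℕ) hk
      rw [if_pos (k.isLt), if_pos hk, if_pos hk, if_pos hk]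
      linarith
    · rw [if_pos (k.isLt), if_neg hk, if_neg hk, if_neg hk]
      ring
  have hP₃inv : P₃ * Matrix.fromBlocks D₁' E CC D₂' = 1 := by
    rw [hP₃, Matrix.fromBlocks_multiply, hTL, hTR, hBL, hBR, Matrix.fromBlocks_one]
  have hP₃det : IsUnit P₃.det :=
    IsUnit.of_mul_eq_one (Matrix.fromBlocks D₁' E CC D₂').det
      (by rw [← Matrix.det_mul, hP₃inv, Matrix.det_one])
  have hP₁det : IsUnit P₁.det := by
    rw [hP₁, Matrix.det_fromBlocks_zero₂₁]
    exact hFtdet.mul hGidet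
  have hP₂det : IsUnit P₂.det := by
    rw [hP₂, Matrix.det_fromBlocks_zero₂₁, Matrix.det_one, Matrix.det_one, one_mul]
    exact isUnit_one
  have hTop : D₁ * E + E * ((p : ℤ) • (1 : Matrix (Fin n) (Fin n) ℤ)) = 0 := by
    rw [hD₁, hE, patt_mul_patt, show min (min m r) m = r from by omega,
      Matrix.mul_smul, Matrix.mul_one, smul_patt, patt_add,
      patt_congr (v := fun _ => (0 : ℤ)) fun k hk => by rw [if_pos hk]; ring]
    exact patt_zero
  have hBot : CC * E + D₂ * ((p : ℤ) • (1 : Matrix (Fin n) (Fin n) ℤ))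
      = Matrix.diagonal fun i : Fin n => if (i : ℕ) < r then 1 else (p : ℤ) := by
    rw [hCC, hE, hD₂, patt_mul_patt, show min (min r r) m = r from by omega,
      Matrix.mul_smul, Matrix.mul_one, smul_patt]
    apply patt_add_patt_eq_diag
    intro k
    by_cases hk : (k : ℕ) < r
    · have h1 := hxy (k : ℕ) hk
      rw [if_pos (k.isLt), if_pos hk, if_pos hk, if_pos hk]
      linarith
    · rw [if_pos (k.isLt), if_neg hk, if_neg hk, if_neg hk]
      ring
  refine ⟨P₃ * P₂ * P₁, Gt, ?_, hGtdet, ?_⟩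
  · rw [Matrix.det_mul, Matrix.det_mul]
    exact (hP₃det.mul hP₂det).mul hP₁det
  · have st1 : Matrix.fromRows Q ((p : ℤ) • (1 : Matrix (Fin n) (Fin n) ℤ)) * Gt
        = Matrix.fromRows (Q * Gt) ((p : ℤ) • Gt) := by
      rw [Matrix.fromRows_mul, Matrix.smul_mul, Matrix.one_mul]
    have st2 : P₁ * Matrix.fromRows (Q * Gt) ((p : ℤ) • Gt)
        = Matrix.fromRows (Ft * Q * Gt) ((p : ℤ) • (1 : Matrix (Fin n) (Fin n) ℤ)) := by
      rw [hP₁, Matrix.fromBlocks_mul_fromRows, Matrix.zero_mul, add_zero, Matrix.zero_mul,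
        zero_add, Matrix.mul_smul, hGiGt, ← Matrix.mul_assoc]
    have st3 : P₂ * Matrix.fromRows (Ft * Q * Gt) ((p : ℤ) • (1 : Matrix (Fin n) (Fin n) ℤ))
        = Matrix.fromRows E ((p : ℤ) • (1 : Matrix (Fin n) (Fin n) ℤ)) := by
      rw [hP₂, Matrix.fromBlocks_mul_fromRows, Matrix.one_mul, Matrix.zero_mul, zero_add,
        Matrix.one_mul, Matrix.neg_mul, Matrix.mul_smul, Matrix.mul_one, hdecomp,
        add_neg_cancel_right]
    have st4 : P₃ * Matrix.fromRows E ((p : ℤ) • (1 : Matrix (Fin n) (Fin n) ℤ))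
        = Matrix.fromRows (0 : Matrix (Fin m) (Fin n) ℤ)
          (Matrix.diagonal fun i : Fin n => if (i : ℕ) < r then 1 else (p : ℤ)) := by
      rw [hP₃, Matrix.fromBlocks_mul_fromRows, hTop, hBot]
    have hassoc : P₃ * P₂ * P₁ * Matrix.fromRows Q ((p : ℤ) • (1 : Matrix (Fin n) (Fin n) ℤ))
          * Gt
        = P₃ * (P₂ * (P₁ * (Matrix.fromRows Q ((p : ℤ) • (1 : Matrix (Fin n) (Fin n) ℤ))
          * Gt))) := by
      simp only [Matrix.mul_assoc]
    rw [hassoc, st1, st2, st3, st4]
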